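/- Proposition A.2(ii) (concentration of the maximum eigenvalue of the sample moment matrix). Fix a category k with n_k i.i.d. observations from the main-effect-free Ising distribution with true parameter θ̄^{(k)}, and assume condition (B): Λ_max(Ū^{(k)}_{S_k,S_k}) ≤ τ_max. Then for any ε > 0, P( Λ_max(Û^{(k)}_{S_k,S_k}) ≥ τ_max + ε ) ≤ 2 exp( −(ε²/2)(n_k/q_k²) + 2 log q_k ). -/

import Mathlib

open Filter Finset Matrix

noncomputable section

/-- Real value of a binary (0/1) observation. -/
def toR (b : Bool) : ℝ := if b then 1 else 0

/-- Index set of pairs (j,j') with j < j'. -/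
abbrev PairIdx (p : ℕ) := {q : Fin p × Fin p // q.1 < q.2}

/-- Symmetric extension of a vector indexed by pairs j < j'. -/
def symExt {p : ℕ} (θ : PairIdx p → ℝ) (j j' : Fin p) : ℝ :=
  if h : j < j' then θ ⟨(j, j'), h⟩ else if h' : j' < j then θ ⟨(j', j), h'⟩ else 0

/-- Energy of the main-effect-free Ising model. -/
def isingEnergy {p : ℕ} (θ : PairIdx p → ℝ) (x : Fin p → Bool) : ℝ :=
  ∑ e : PairIdx p, θ e * toR (x e.1.1) * toR (x e.1.2)

/-- Pmf of the main-effect-free Ising model. -/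
def isingPmf {p : ℕ} (θ : PairIdx p → ℝ) (x : Fin p → Bool) : ℝ :=
  Real.exp (isingEnergy θ x) / ∑ y : Fin p → Bool, Real.exp (isingEnergy θ y)

/-- Energy of the Ising model with main effects, parameter a symmetric matrix. -/
def isingEnergyFull {p : ℕ} (Θ : Matrix (Fin p) (Fin p) ℝ) (x : Fin p → Bool) : ℝ :=
  ∑ j, Θ j j * toR (x j) + ∑ e : PairIdx p, Θ e.1.1 e.1.2 * toR (x e.1.1) * toR (x e.1.2)

/-- Pmf of the Ising model with main effects. -/
def isingPmfFull {p : ℕ} (Θ : Matrix (Fin p) (Fin p) ℝ) (x : Fin p → Bool) : ℝ :=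
  Real.exp (isingEnergyFull Θ x) / ∑ y : Fin p → Bool, Real.exp (isingEnergyFull Θ y)

/-- Local field at node j (no main effects). -/
def localField {p : ℕ} (θ : PairIdx p → ℝ) (x : Fin p → Bool) (j : Fin p) : ℝ :=
  ∑ j' ∈ Finset.univ.erase j, symExt θ j j' * toR (x j')

/-- One-observation pseudo-log-likelihood (no main effects). -/
def pllOne {p : ℕ} (x : Fin p → Bool) (θ : PairIdx p → ℝ) : ℝ :=
  ∑ j, (toR (x j) * localField θ x j - Real.log (1 + Real.exp (localField θ x j)))

/-- Pseudo-log-likelihood of n observations (no main effects). -/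
def pll {p n : ℕ} (x : Fin n → Fin p → Bool) (θ : PairIdx p → ℝ) : ℝ :=
  (n : ℝ)⁻¹ * ∑ i, pllOne (x i) θ

/-- One-observation pseudo-log-likelihood with main effects (matrix parameter). -/
def pllMainOne {p : ℕ} (x : Fin p → Bool) (Θ : Matrix (Fin p) (Fin p) ℝ) : ℝ :=
  ∑ j, (toR (x j) * (Θ j j + ∑ j' ∈ Finset.univ.erase j, Θ j j' * toR (x j'))
    - Real.log (1 + Real.exp (Θ j j + ∑ j' ∈ Finset.univ.erase j, Θ j j' * toR (x j'))))

/-- Pseudo-log-likelihood with main effects of n observations. -/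
def pllMain {p n : ℕ} (x : Fin n → Fin p → Bool) (Θ : Matrix (Fin p) (Fin p) ℝ) : ℝ :=
  (n : ℝ)⁻¹ * ∑ i, pllMainOne (x i) Θ

/-- Entrywise (Schur--Hadamard) product of matrices. -/
def hprod {p : ℕ} (A B : Matrix (Fin p) (Fin p) ℝ) : Matrix (Fin p) (Fin p) ℝ :=
  Matrix.of fun i j => A i j * B i j

/-- Partial derivative of l at θ in coordinate e. -/
def gradAt {p : ℕ} (l : (PairIdx p → ℝ) → ℝ) (θ : PairIdx p → ℝ) (e : PairIdx p) : ℝ :=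
  fderiv ℝ l θ (Pi.single e 1)

/-- Hessian matrix of l at θ. -/
def hessAt {p : ℕ} (l : (PairIdx p → ℝ) → ℝ) (θ : PairIdx p → ℝ) :
    Matrix (PairIdx p) (PairIdx p) ℝ :=
  Matrix.of fun e e' => fderiv ℝ (fun t => fderiv ℝ l t (Pi.single e' 1)) θ (Pi.single e 1)

/-- Design matrix of an observation: column (j,j') has x_{j'} in row j and x_j in row j'. -/
def designMat {p : ℕ} (x : Fin p → Bool) : Matrix (Fin p) (PairIdx p) ℝ :=
  Matrix.of fun j e => if j = e.1.1 then toR (x e.1.2) else if j = e.1.2 then toR (x e.1.1) else 0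

/-- Probability of E under the weight w on a finite sample space. -/
def finProb {Ω : Type*} [Fintype Ω] (w : Ω → ℝ) (E : Set Ω) : ℝ :=
  ∑ ω, Set.indicator E w ω

/-- Euclidean norm. -/
def euclNorm {ι : Type*} [Fintype ι] (v : ι → ℝ) : ℝ := Real.sqrt (∑ i, v i ^ 2)

/-- Sup norm of a vector. -/
def supNorm {ι : Type*} [Fintype ι] (v : ι → ℝ) : ℝ := ⨆ i, |v i|

/-- Smallest eigenvalue of a symmetric matrix, via the Rayleigh quotient. -/
def lamMin {ι : Type*} [Fintype ι] (A : Matrix ι ι ℝ) : ℝ :=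
  ⨅ v : {v : ι → ℝ // ∑ i, v i ^ 2 = 1}, v.1 ⬝ᵥ A.mulVec v.1

/-- Largest eigenvalue of a symmetric matrix, via the Rayleigh quotient. -/
def lamMax {ι : Type*} [Fintype ι] (A : Matrix ι ι ℝ) : ℝ :=
  ⨆ v : {v : ι → ℝ // ∑ i, v i ^ 2 = 1}, v.1 ⬝ᵥ A.mulVec v.1

/-- Maximum absolute row sum norm. -/
def rowSumNorm {ι κ : Type*} [Fintype ι] [Fintype κ] (A : Matrix ι κ ℝ) : ℝ :=
  ⨆ i, ∑ j, |A i j|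

/-- Submatrix with rows in S and columns in T. -/
def subm {ι : Type*} (A : Matrix ι ι ℝ) (S T : Finset ι) : Matrix ↥S ↥T ℝ :=
  A.submatrix (fun i => i.1) (fun j => j.1)

/-- Support of a parameter vector, as a finset of pairs. -/
def suppF {p : ℕ} (θ : PairIdx p → ℝ) : Finset (PairIdx p) :=
  Finset.univ.filter (fun e => θ e ≠ 0)

/-- Union of the supports over the K categories. -/
def unionSupp {p K : ℕ} (θb : Fin K → PairIdx p → ℝ) : Finset (PairIdx p) :=
  Finset.univ.filter (fun e => ∃ k, θb k e ≠ 0)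

/-- Population Fisher information of the pseudo-likelihood. -/
def Qpop {p : ℕ} (θb : PairIdx p → ℝ) : Matrix (PairIdx p) (PairIdx p) ℝ :=
  - ∑ x : Fin p → Bool, isingPmf θb x • hessAt (pllOne x) θb

/-- Sample Fisher information of the pseudo-likelihood at the truth. -/
def Qhat {p n : ℕ} (x : Fin n → Fin p → Bool) (θb : PairIdx p → ℝ) :
    Matrix (PairIdx p) (PairIdx p) ℝ :=
  - hessAt (pll x) θb

/-- Population second-moment matrix of the design matrices. -/
def Upop {p : ℕ} (θb : PairIdx p → ℝ) : Matrix (PairIdx p) (PairIdx p) ℝ :=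
  ∑ x : Fin p → Bool, isingPmf θb x • ((designMat x)ᵀ * designMat x)

/-- Sample second-moment matrix of the design matrices. -/
def Uhat {p n : ℕ} (x : Fin n → Fin p → Bool) : Matrix (PairIdx p) (PairIdx p) ℝ :=
  (n : ℝ)⁻¹ • ∑ i, ((designMat (x i))ᵀ * designMat (x i))

/-- Joint group-penalized pseudo-likelihood criterion F_λ. -/
def jointCrit {p K : ℕ} (nk : Fin K → ℕ) (x : ∀ k, Fin (nk k) → Fin p → Bool) (lam : ℝ)
    (θ : Fin K → PairIdx p → ℝ) : ℝ :=
  ∑ k, pll (x k) (θ k) - lam * ∑ e : PairIdx p, Real.sqrt (∑ k, |θ k e|)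

/-- Product (i.i.d. across observations and categories) weight of a multi-category sample. -/
def prodW {K p : ℕ} (nk : Fin K → ℕ) (θb : Fin K → PairIdx p → ℝ)
    (xs : ∀ k, Fin (nk k) → Fin p → Bool) : ℝ :=
  ∏ k, ∏ i, isingPmf (θb k) (xs k i)

end

section Helpers
theorem lamMax_of_isEmpty {ι : Type*} [Fintype ι] [IsEmpty ι] (A : Matrix ι ι ℝ) :
    lamMax A = 0 := by
  haveI : IsEmpty {v : ι → ℝ // ∑ i, v i ^ 2 = 1} := ⟨fun v => by
    have h := v.2
    simp [Finset.univ_eq_empty] at h⟩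
  exact Real.iSup_of_isEmpty _
open Filter Finset Matrix

section Aux
variable {ι : Type*} [Fintype ι]

theorem quadForm_eq (A : Matrix ι ι ℝ) (v : ι → ℝ) :
    v ⬝ᵥ A.mulVec v = ∑ e, ∑ e', v e * A e e' * v e' := by
  simp only [dotProduct, Matrix.mulVec, dotProduct, Finset.mul_sum]
  exact Finset.sum_congr rfl fun e _ => Finset.sum_congr rfl fun e' _ => by ring

theorem unit_abs_le_one (v : ι → ℝ) (hv : ∑ i, v i ^ 2 = 1) (i : ι) : |v i| ≤ 1 := by
  have h1 : v i ^ 2 ≤ 1 := by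
    rw [← hv]
    exact Finset.single_le_sum (f := fun i => v i ^ 2) (fun j _ => sq_nonneg _)
      (Finset.mem_univ i)
  nlinarith [abs_nonneg (v i), sq_abs (v i)]

theorem quadForm_bdd (A : Matrix ι ι ℝ) :
    BddAbove (Set.range fun v : {v : ι → ℝ // ∑ i, v i ^ 2 = 1} =>
      v.1 ⬝ᵥ A.mulVec v.1) := by
  refine ⟨∑ e, ∑ e', |A e e'|, ?_⟩
  rintro y ⟨v, rfl⟩
  show v.1 ⬝ᵥ A.mulVec v.1 ≤ _
  rw [quadForm_eq]
  refine Finset.sum_le_sum fun e _ => Finset.sum_le_sum fun e' _ => ?_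
  calc v.1 e * A e e' * v.1 e' ≤ |v.1 e * A e e' * v.1 e'| := le_abs_self _
    _ = |v.1 e| * |A e e'| * |v.1 e'| := by rw [abs_mul, abs_mul]
    _ ≤ 1 * |A e e'| * 1 := by
        have h1 := unit_abs_le_one v.1 v.2 e
        have h2 := unit_abs_le_one v.1 v.2 e'
        refine mul_le_mul (mul_le_mul_of_nonneg_right h1 (abs_nonneg _)) h2
          (abs_nonneg _) (by positivity)
    _ = |A e e'| := by ring

theorem le_lamMax (A : Matrix ι ι ℝ) (v : ι → ℝ) (hv : ∑ i, v i ^ 2 = 1) :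
    v ⬝ᵥ A.mulVec v ≤ lamMax A :=
  le_ciSup (quadForm_bdd A) (⟨v, hv⟩ : {v : ι → ℝ // ∑ i, v i ^ 2 = 1})

theorem quadForm_le_card_mul (D : Matrix ι ι ℝ) (c : ℝ) (hc : ∀ e e', |D e e'| ≤ c)
    (v : ι → ℝ) (hv : ∑ i, v i ^ 2 = 1) :
    v ⬝ᵥ D.mulVec v ≤ c * Fintype.card ι := by
  have hne : Nonempty ι := by
    by_contra h
    rw [not_nonempty_iff] at h
    simp [Finset.univ_eq_empty] at hv
  have hc0 : 0 ≤ c := le_trans (abs_nonneg _) (hc (Classical.arbitrary ι) (Classical.arbitrary ι))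
  have key : v ⬝ᵥ D.mulVec v ≤ c * (∑ e, |v e|) ^ 2 := by
    rw [quadForm_eq, sq, Finset.sum_mul_sum, Finset.mul_sum]
    refine Finset.sum_le_sum fun e _ => ?_
    rw [Finset.mul_sum]
    refine Finset.sum_le_sum fun e' _ => ?_
    calc v e * D e e' * v e' ≤ |v e * D e e' * v e'| := le_abs_self _
      _ = |D e e'| * (|v e| * |v e'|) := by rw [abs_mul, abs_mul]; ring
      _ ≤ c * (|v e| * |v e'|) :=
          mul_le_mul_of_nonneg_right (hc e e')
            (mul_nonneg (abs_nonneg _) (abs_nonneg _))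
  have hcs : (∑ e, |v e|) ^ 2 ≤ (Fintype.card ι : ℝ) := by
    have h := Finset.sum_mul_sq_le_sq_mul_sq Finset.univ (fun e => |v e|) (fun _ => 1)
    simp only [mul_one, one_pow, sq_abs, Finset.sum_const, Finset.card_univ,
      nsmul_eq_mul, mul_one] at h
    calc (∑ e, |v e|) ^ 2 ≤ (∑ e, |v e| ^ 2) * (Fintype.card ι : ℝ) := by
          simpa [mul_comm] using h
      _ = (Fintype.card ι : ℝ) := by
          simp only [sq_abs, hv, one_mul]
  calc v ⬝ᵥ D.mulVec v ≤ c * (∑ e, |v e|) ^ 2 := key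
    _ ≤ c * (Fintype.card ι : ℝ) := mul_le_mul_of_nonneg_left hcs hc0
end Aux
section Ising
variable {p : ℕ}

theorem isingPmf_nonneg (θ : PairIdx p → ℝ) (x : Fin p → Bool) : 0 ≤ isingPmf θ x := by
  unfold isingPmf
  have hd : 0 < ∑ y : Fin p → Bool, Real.exp (isingEnergy θ y) :=
    Finset.sum_pos (fun y _ => Real.exp_pos _) ⟨fun _ => false, Finset.mem_univ _⟩
  positivity

theorem isingPmf_sum_one (θ : PairIdx p → ℝ) : ∑ x, isingPmf θ x = 1 := by
  unfold isingPmf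
  have hd : 0 < ∑ y : Fin p → Bool, Real.exp (isingEnergy θ y) :=
    Finset.sum_pos (fun y _ => Real.exp_pos _) ⟨fun _ => false, Finset.mem_univ _⟩
  rw [← Finset.sum_div, div_self hd.ne']

theorem toR_mem (b : Bool) : 0 ≤ toR b ∧ toR b ≤ 1 := by
  unfold toR; cases b <;> norm_num

theorem designMat_mem (x : Fin p → Bool) (j : Fin p) (e : PairIdx p) :
    0 ≤ designMat x j e ∧ designMat x j e ≤ 1 := by
  unfold designMat
  simp only [Matrix.of_apply]
  split_ifs <;> first | exact toR_mem _ | norm_num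

/-- Entry of the one-observation moment matrix. -/
noncomputable def Zent (e e' : PairIdx p) (x : Fin p → Bool) : ℝ :=
  ((designMat x)ᵀ * designMat x) e e'

theorem Zent_nonneg (e e' : PairIdx p) (x : Fin p → Bool) : 0 ≤ Zent e e' x := by
  unfold Zent
  rw [Matrix.mul_apply]
  refine Finset.sum_nonneg fun j _ => ?_
  exact mul_nonneg (designMat_mem x j e).1 (designMat_mem x j e').1

theorem Zent_le_two (e e' : PairIdx p) (x : Fin p → Bool) : Zent e e' x ≤ 2 := by
  classical
  unfold Zent
  rw [Matrix.mul_apply]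
  have hterm : ∀ j : Fin p, (designMat x)ᵀ e j * designMat x j e'
      ≤ (if j = e.1.1 then (1:ℝ) else 0) + (if j = e.1.2 then (1:ℝ) else 0) := by
    intro j
    have h1 := designMat_mem x j e
    have h2 := designMat_mem x j e'
    have hD : (designMat x)ᵀ e j = designMat x j e := rfl
    rw [hD]
    have hle : designMat x j e * designMat x j e' ≤ designMat x j e := by
      nlinarith [h1.1, h1.2, h2.1, h2.2]
    refine le_trans hle ?_
    unfold designMat
    simp only [Matrix.of_apply]
    split_ifs with ha hb <;> simp_all <;> nlinarith [(toR_mem (x e.1.2)).2, (toR_mem (x e.1.1)).2]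
  calc ∑ j, (designMat x)ᵀ e j * designMat x j e'
      ≤ ∑ j, ((if j = e.1.1 then (1:ℝ) else 0) + (if j = e.1.2 then (1:ℝ) else 0)) :=
        Finset.sum_le_sum fun j _ => hterm j
    _ = 2 := by
        rw [Finset.sum_add_distrib]
        simp [Finset.sum_ite_eq']
        norm_num

theorem Upop_entry (θ : PairIdx p → ℝ) (e e' : PairIdx p) :
    Upop θ e e' = ∑ x, isingPmf θ x * Zent e e' x := by
  unfold Upop Zent
  rw [Matrix.sum_apply]
  exact Finset.sum_congr rfl fun x _ => rfl

theorem Uhat_entry {n : ℕ} (xs : Fin n → Fin p → Bool) (e e' : PairIdx p) :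
    Uhat xs e e' = (n : ℝ)⁻¹ * ∑ i, Zent e e' (xs i) := by
  unfold Uhat Zent
  rw [Matrix.smul_apply, Matrix.sum_apply, smul_eq_mul]

end Ising

theorem finProb_le_sum {Ω : Type*} [Fintype Ω] (w : Ω → ℝ) (hw : ∀ ω, 0 ≤ w ω)
    (E : Set Ω) {κ : Type*} [Fintype κ] (A : κ → Set Ω)
    (h : ∀ ω ∈ E, ∃ k, ω ∈ A k) :
    finProb w E ≤ ∑ k, finProb w (A k) := by
  classical
  unfold finProb
  rw [Finset.sum_comm]
  refine Finset.sum_le_sum fun ω _ => ?_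
  by_cases hmem : ω ∈ E
  · obtain ⟨k0, hk0⟩ := h ω hmem
    rw [Set.indicator_of_mem hmem]
    calc w ω = Set.indicator (A k0) w ω := (Set.indicator_of_mem hk0 w).symm
      _ ≤ ∑ k, Set.indicator (A k) w ω :=
          Finset.single_le_sum (f := fun k => Set.indicator (A k) w ω)
            (fun k _ => Set.indicator_nonneg (fun x _ => hw x) ω) (Finset.mem_univ k0)
  · rw [Set.indicator_of_notMem hmem]
    exact Finset.sum_nonneg fun k _ => Set.indicator_nonneg (fun x _ => hw x) ω

theorem prod_sum_pow {Ω₀ : Type*} [Fintype Ω₀] (g : Ω₀ → ℝ) (n : ℕ) :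
    ∑ xs : Fin n → Ω₀, ∏ i, g (xs i) = (∑ x, g x) ^ n := by
  classical
  have h := Finset.prod_univ_sum (t := fun _ : Fin n => (Finset.univ : Finset Ω₀))
    (f := fun _ x => g x)
  simp only [Fintype.piFinset_univ, Finset.prod_const, Finset.card_univ,
    Fintype.card_fin] at h
  exact h.symm

theorem chernoff {Ω₀ : Type*} [Fintype Ω₀] (f : Ω₀ → ℝ) (hf0 : ∀ x, 0 ≤ f x)
    (Z : Ω₀ → ℝ) (n : ℕ) (c t : ℝ) (ht : 0 ≤ t) :
    finProb (fun xs : Fin n → Ω₀ => ∏ i, f (xs i)) {xs | c ≤ ∑ i, Z (xs i)}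
      ≤ Real.exp (-t * c) * (∑ x, f x * Real.exp (t * Z x)) ^ n := by
  classical
  have hpt : ∀ xs : Fin n → Ω₀,
      Set.indicator {xs : Fin n → Ω₀ | c ≤ ∑ i, Z (xs i)} (fun xs => ∏ i, f (xs i)) xs
        ≤ Real.exp (t * (∑ i, Z (xs i)) - t * c) * ∏ i, f (xs i) := by
    intro xs
    have hprod : (0:ℝ) ≤ ∏ i, f (xs i) := Finset.prod_nonneg fun i _ => hf0 _
    by_cases hmem : xs ∈ {xs : Fin n → Ω₀ | c ≤ ∑ i, Z (xs i)}
    · rw [Set.indicator_of_mem hmem]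
      have h1 : (1:ℝ) ≤ Real.exp (t * (∑ i, Z (xs i)) - t * c) := by
        rw [Real.one_le_exp_iff]
        have := hmem
        simp only [Set.mem_setOf_eq] at this
        nlinarith
      nlinarith
    · rw [Set.indicator_of_notMem hmem]
      positivity
  calc finProb (fun xs : Fin n → Ω₀ => ∏ i, f (xs i)) {xs | c ≤ ∑ i, Z (xs i)}
      ≤ ∑ xs : Fin n → Ω₀, Real.exp (t * (∑ i, Z (xs i)) - t * c) * ∏ i, f (xs i) :=
        Finset.sum_le_sum fun xs _ => hpt xs
    _ = Real.exp (-t * c) * ∑ xs : Fin n → Ω₀, ∏ i, (f (xs i) * Real.exp (t * Z (xs i))) := by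
        rw [Finset.mul_sum]
        refine Finset.sum_congr rfl fun xs _ => ?_
        rw [Finset.prod_mul_distrib, ← Real.exp_sum, sub_eq_add_neg, add_comm,
          Real.exp_add]
        rw [Finset.mul_sum]
        ring
    _ = Real.exp (-t * c) * (∑ x, f x * Real.exp (t * Z x)) ^ n := by
        rw [prod_sum_pow (fun x => f x * Real.exp (t * Z x)) n]

/-- Finite Hoeffding mgf lemma. -/
theorem hoeff_mgf {ι : Type*} [Fintype ι] (w x : ι → ℝ) (hw0 : ∀ i, 0 ≤ w i)
    (hw1 : ∑ i, w i = 1) (a b : ℝ) (hx : ∀ i, a ≤ x i ∧ x i ≤ b) (t : ℝ) (ht : 0 ≤ t) :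
    ∑ i, w i * Real.exp (t * x i)
      ≤ Real.exp (t * (∑ i, w i * x i) + t ^ 2 * (b - a) ^ 2 / 8) := by
  classical
  set μ := ∑ i, w i * x i with hμ
  set F : ℝ → ℝ := fun s => ∑ i, w i * Real.exp (s * x i) with hF
  set F1 : ℝ → ℝ := fun s => ∑ i, w i * x i * Real.exp (s * x i) with hF1
  set F2 : ℝ → ℝ := fun s => ∑ i, w i * x i ^ 2 * Real.exp (s * x i) with hF2
  have hFpos : ∀ s, 0 < F s := by
    intro s
    obtain ⟨i0, hi0⟩ : ∃ i, 0 < w i := by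
      by_contra h
      push_neg at h
      have : ∀ i, w i = 0 := fun i => le_antisymm (h i) (hw0 i)
      simp [this] at hw1
    refine Finset.sum_pos' (fun i _ => ?_) ⟨i0, Finset.mem_univ _, ?_⟩
    · exact mul_nonneg (hw0 i) (Real.exp_pos _).le
    · exact mul_pos hi0 (Real.exp_pos _)
  have hdF : ∀ s, HasDerivAt F (F1 s) s := by
    intro s
    have : ∀ i : ι, HasDerivAt (fun s => w i * Real.exp (s * x i))
        (w i * x i * Real.exp (s * x i)) s := by
      intro i
      have h1 : HasDerivAt (fun s : ℝ => s * x i) (x i) s := hasDerivAt_mul_const _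
      have h2 := (h1.exp).const_mul (w i)
      exact h2.congr_deriv (by ring)
    simpa using HasDerivAt.fun_sum (fun i _ => this i)
  have hdF1 : ∀ s, HasDerivAt F1 (F2 s) s := by
    intro s
    have : ∀ i : ι, HasDerivAt (fun s => w i * x i * Real.exp (s * x i))
        (w i * x i ^ 2 * Real.exp (s * x i)) s := by
      intro i
      have h1 : HasDerivAt (fun s : ℝ => s * x i) (x i) s := hasDerivAt_mul_const _
      have h2 := (h1.exp).const_mul (w i * x i)
      exact h2.congr_deriv (by ring)
    simpa using HasDerivAt.fun_sum (fun i _ => this i)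
  -- key variance bound
  have key : ∀ s, F2 s * F s - F1 s ^ 2 ≤ (b - a) ^ 2 / 4 * F s ^ 2 := by
    intro s
    set m := (a + b) / 2 with hm
    set G2 : ℝ := ∑ i, w i * (x i - m) ^ 2 * Real.exp (s * x i) with hG2
    set G1 : ℝ := ∑ i, w i * (x i - m) * Real.exp (s * x i) with hG1
    have e2 : G2 = F2 s - 2 * m * F1 s + m ^ 2 * F s := by
      simp only [hG2, hF, hF1, hF2, Finset.mul_sum, ← Finset.sum_add_distrib,
        ← Finset.sum_sub_distrib]
      exact Finset.sum_congr rfl fun i _ => by ring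
    have e1 : G1 = F1 s - m * F s := by
      simp only [hG1, hF, hF1, Finset.mul_sum, ← Finset.sum_sub_distrib]
      exact Finset.sum_congr rfl fun i _ => by ring
    have id1 : F2 s * F s - F1 s ^ 2 = G2 * F s - G1 ^ 2 := by
      rw [e1, e2]; ring
    have hG2le : G2 ≤ (b - a) ^ 2 / 4 * F s := by
      rw [hG2, hF, Finset.mul_sum]
      refine Finset.sum_le_sum fun i _ => ?_
      have habs : |x i - m| ≤ (b - a) / 2 := by
        rw [abs_le]; constructor <;> [linarith [(hx i).1]; linarith [(hx i).2]]
      have : (x i - m) ^ 2 ≤ ((b - a) / 2) ^ 2 := by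
        rw [← sq_abs]; exact pow_le_pow_left₀ (abs_nonneg _) habs 2
      have h2 : (x i - m) ^ 2 ≤ (b - a) ^ 2 / 4 := by nlinarith
      have := mul_le_mul_of_nonneg_right h2 (Real.exp_pos (s * x i)).le
      calc w i * (x i - m) ^ 2 * Real.exp (s * x i)
          = w i * ((x i - m) ^ 2 * Real.exp (s * x i)) := by ring
        _ ≤ w i * ((b - a) ^ 2 / 4 * Real.exp (s * x i)) :=
            mul_le_mul_of_nonneg_left this (hw0 i)
        _ = (b - a) ^ 2 / 4 * (w i * Real.exp (s * x i)) := by ring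
    calc F2 s * F s - F1 s ^ 2 = G2 * F s - G1 ^ 2 := id1
      _ ≤ G2 * F s := by nlinarith [sq_nonneg G1]
      _ ≤ (b - a) ^ 2 / 4 * F s * F s :=
          mul_le_mul_of_nonneg_right hG2le (hFpos s).le
      _ = (b - a) ^ 2 / 4 * F s ^ 2 := by ring
  set g' : ℝ → ℝ := fun s => F1 s / F s - μ - s * ((b - a) ^ 2 / 4) with hg'def
  set g : ℝ → ℝ := fun s => Real.log (F s) - s * μ - s ^ 2 * (b - a) ^ 2 / 8 with hgdef
  have hdg : ∀ s, HasDerivAt g (g' s) s := by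
    intro s
    have h1 : HasDerivAt (fun s => Real.log (F s)) (F1 s / F s) s :=
      (hdF s).log (hFpos s).ne'
    have h2 : HasDerivAt (fun s : ℝ => s * μ) μ s := hasDerivAt_mul_const _
    have h3 : HasDerivAt (fun s : ℝ => s ^ 2 * (b - a) ^ 2 / 8)
        (2 * s * (b - a) ^ 2 / 8) s := by
      have := ((hasDerivAt_pow 2 s).mul_const ((b - a) ^ 2)).div_const 8
      simpa using this
    have := (h1.fun_sub h2).fun_sub h3
    refine this.congr_deriv ?_
    show F1 s / F s - μ - 2 * s * (b - a) ^ 2 / 8 = F1 s / F s - μ - s * ((b - a) ^ 2 / 4); ring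
  have hdg' : ∀ s, HasDerivAt g'
      ((F2 s * F s - F1 s * F1 s) / F s ^ 2 - (b - a) ^ 2 / 4) s := by
    intro s
    have h1 : HasDerivAt (fun s => F1 s / F s)
        ((F2 s * F s - F1 s * F1 s) / F s ^ 2) s := (hdF1 s).div (hdF s) (hFpos s).ne'
    have h2 : HasDerivAt (fun s : ℝ => s * ((b - a) ^ 2 / 4)) ((b - a) ^ 2 / 4) s :=
      hasDerivAt_mul_const _
    have := (h1.fun_sub (hasDerivAt_const _ μ)).fun_sub h2
    simpa [hg'def] using this
  have hg'nonpos : ∀ s, deriv g' s ≤ 0 := by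
    intro s
    rw [(hdg' s).deriv]
    have h2 : (0:ℝ) < F s ^ 2 := pow_pos (hFpos s) 2
    rw [sub_nonpos, div_le_iff₀ h2]
    calc F2 s * F s - F1 s * F1 s = F2 s * F s - F1 s ^ 2 := by ring
      _ ≤ (b - a) ^ 2 / 4 * F s ^ 2 := key s
  have hanti : Antitone g' :=
    antitone_of_deriv_nonpos (fun s => (hdg' s).differentiableAt) hg'nonpos
  have hg'0 : g' 0 = 0 := by
    have hF0 : F 0 = 1 := by simp [hF, hw1]
    have hF10 : F1 0 = μ := by simp [hF1, hμ]
    simp [hg'def, hF0, hF10]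
  have hg'le : ∀ s, 0 ≤ s → g' s ≤ 0 := fun s hs => hg'0 ▸ hanti hs
  have hganti : AntitoneOn g (Set.Ici 0) := by
    refine antitoneOn_of_deriv_nonpos (convex_Ici 0)
      (fun s _ => (hdg s).differentiableAt.continuousAt.continuousWithinAt)
      (fun s hs => (hdg s).differentiableAt.differentiableWithinAt) fun s hs => ?_
    rw [(hdg s).deriv]
    exact hg'le s (le_of_lt (by simpa using hs))
  have hg0 : g 0 = 0 := by
    have hF0 : F 0 = 1 := by simp [hF, hw1]
    simp [hgdef, hF0]
  have hgt : g t ≤ 0 := hg0 ▸ hganti (Set.self_mem_Ici) (Set.mem_Ici.mpr ht) ht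
  have : Real.log (F t) ≤ t * μ + t ^ 2 * (b - a) ^ 2 / 8 := by
    simp only [hgdef] at hgt; linarith
  calc F t ≤ Real.exp (Real.log (F t)) := by rw [Real.exp_log (hFpos t)]
    _ ≤ Real.exp (t * μ + t ^ 2 * (b - a) ^ 2 / 8) := Real.exp_le_exp.mpr this
theorem event_bound {p : ℕ} (θb : PairIdx p → ℝ) (n : ℕ) (hn : 0 < n)
    (e e' : PairIdx p) (t0 : ℝ) (ht0 : 0 < t0) (sgn : Bool) :
    finProb (fun xs : Fin n → Fin p → Bool => ∏ i, isingPmf θb (xs i))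
        {xs | t0 ≤ (if sgn then Uhat xs e e' - Upop θb e e'
          else Upop θb e e' - Uhat xs e e')}
      ≤ Real.exp (-(n : ℝ) * t0 ^ 2 / 2) := by
  classical
  have hf0 := isingPmf_nonneg θb
  have hf1 := isingPmf_sum_one θb
  have hn0 : (0:ℝ) < (n : ℝ) := by exact_mod_cast hn
  set μ : ℝ := Upop θb e e' with hμdef
  have hμ : μ = ∑ x, isingPmf θb x * Zent e e' x := Upop_entry θb e e'
  cases sgn
  · -- lower tail: use Z = -Zent
    set Z : (Fin p → Bool) → ℝ := fun x => -(Zent e e' x) with hZdef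
    set c : ℝ := (t0 - μ) * n with hcdef
    have hset : {xs : Fin n → Fin p → Bool | t0 ≤ (if false then Uhat xs e e' - μ
        else μ - Uhat xs e e')} = {xs | c ≤ ∑ i, Z (xs i)} := by
      ext xs
      simp only [Set.mem_setOf_eq, Bool.false_eq_true, if_false, Uhat_entry,
        inv_mul_eq_div]
      have hsum : ∑ i, Z (xs i) = -∑ i, Zent e e' (xs i) := by
        simp [hZdef]
      rw [hsum, le_sub_comm, div_le_iff₀ hn0, hcdef]
      constructor <;> intro h <;> nlinarith
    rw [hset]
    have hmgf : ∑ x, isingPmf θb x * Real.exp (t0 * Z x)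
        ≤ Real.exp (t0 * (-μ) + t0 ^ 2 * (0 - (-2)) ^ 2 / 8) := by
      have hb : ∀ x, -2 ≤ Z x ∧ Z x ≤ 0 := fun x =>
        ⟨by simpa [hZdef] using neg_le_neg (Zent_le_two e e' x),
         by simpa [hZdef] using neg_nonpos_of_nonneg (Zent_nonneg e e' x)⟩
      have h := hoeff_mgf (isingPmf θb) Z hf0 hf1 (-2) 0 hb t0 ht0.le
      have hmean : ∑ x, isingPmf θb x * Z x = -μ := by
        simp only [hZdef, mul_neg, Finset.sum_neg_distrib]
        rw [hμ]
      rwa [hmean] at h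
    calc finProb (fun xs : Fin n → Fin p → Bool => ∏ i, isingPmf θb (xs i))
          {xs | c ≤ ∑ i, Z (xs i)}
        ≤ Real.exp (-t0 * c) * (∑ x, isingPmf θb x * Real.exp (t0 * Z x)) ^ n :=
          chernoff (isingPmf θb) hf0 Z n c t0 ht0.le
      _ ≤ Real.exp (-t0 * c)
            * Real.exp (t0 * (-μ) + t0 ^ 2 * (0 - (-2)) ^ 2 / 8) ^ n := by
          refine mul_le_mul_of_nonneg_left (pow_le_pow_left₀ ?_ hmgf n)
            (Real.exp_pos _).le
          exact Finset.sum_nonneg fun x _ =>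
            mul_nonneg (hf0 x) (Real.exp_pos _).le
      _ = Real.exp (-(n : ℝ) * t0 ^ 2 / 2) := by
          rw [← Real.exp_nat_mul, ← Real.exp_add]
          congr 1
          rw [hcdef]; ring
  · -- upper tail: use Z = Zent
    set Z : (Fin p → Bool) → ℝ := fun x => Zent e e' x with hZdef
    set c : ℝ := (t0 + μ) * n with hcdef
    have hset : {xs : Fin n → Fin p → Bool | t0 ≤ (if true then Uhat xs e e' - μ
        else μ - Uhat xs e e')} = {xs | c ≤ ∑ i, Z (xs i)} := by
      ext xs
      simp only [Set.mem_setOf_eq, if_true, Uhat_entry, inv_mul_eq_div]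
      rw [le_sub_iff_add_le, le_div_iff₀ hn0, hcdef]
    rw [hset]
    have hmgf : ∑ x, isingPmf θb x * Real.exp (t0 * Z x)
        ≤ Real.exp (t0 * μ + t0 ^ 2 * (2 - 0) ^ 2 / 8) := by
      have hb : ∀ x, 0 ≤ Z x ∧ Z x ≤ 2 := fun x =>
        ⟨Zent_nonneg e e' x, Zent_le_two e e' x⟩
      have h := hoeff_mgf (isingPmf θb) Z hf0 hf1 0 2 hb t0 ht0.le
      rwa [← hμ] at h
    calc finProb (fun xs : Fin n → Fin p → Bool => ∏ i, isingPmf θb (xs i))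
          {xs | c ≤ ∑ i, Z (xs i)}
        ≤ Real.exp (-t0 * c) * (∑ x, isingPmf θb x * Real.exp (t0 * Z x)) ^ n :=
          chernoff (isingPmf θb) hf0 Z n c t0 ht0.le
      _ ≤ Real.exp (-t0 * c)
            * Real.exp (t0 * μ + t0 ^ 2 * (2 - 0) ^ 2 / 8) ^ n := by
          refine mul_le_mul_of_nonneg_left (pow_le_pow_left₀ ?_ hmgf n)
            (Real.exp_pos _).le
          exact Finset.sum_nonneg fun x _ =>
            mul_nonneg (hf0 x) (Real.exp_pos _).le
      _ = Real.exp (-(n : ℝ) * t0 ^ 2 / 2) := by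
          rw [← Real.exp_nat_mul, ← Real.exp_add]
          congr 1
          rw [hcdef]; ring
theorem final_arith (q n ε : ℝ) (hq : 1 ≤ q) (hn : 0 < n) (hε : 0 < ε) :
    q * q * 2 * Real.exp (-n * (ε / q) ^ 2 / 2)
      = 2 * Real.exp (-(ε ^ 2 / 2) * (n / q ^ 2) + 2 * Real.log q) := by
  have hq0 : (0:ℝ) < q := by linarith
  have h1 : Real.exp (2 * Real.log q) = q ^ 2 := by
    have : (2:ℝ) * Real.log q = Real.log (q ^ 2) := by
      rw [Real.log_pow]; push_cast; ring
    rw [this, Real.exp_log (by positivity)]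
  have h2 : -n * (ε / q) ^ 2 / 2 = -(ε ^ 2 / 2) * (n / q ^ 2) := by
    rw [div_pow]; field_simp
  rw [Real.exp_add, h1, h2]; ring

end Helpers

/-- Proposition A.2(ii): concentration of the maximum eigenvalue of the sample moment
matrix of a single category of i.i.d. Ising data. -/
theorem stmt_6 (p nkk : ℕ) (hp : 1 ≤ p) (hnk : 1 ≤ nkk)
    (θb : PairIdx p → ℝ) (τmax : ℝ) (hτmax : 0 < τmax)
    (condB : lamMax (subm (Upop θb) (suppF θb) (suppF θb)) ≤ τmax)
    (ε : ℝ) (hε : 0 < ε) :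
    finProb (fun xs : Fin nkk → Fin p → Bool => ∏ i, isingPmf θb (xs i))
        {xs | τmax + ε ≤ lamMax (subm (Uhat xs) (suppF θb) (suppF θb))}
      ≤ 2 * Real.exp (-(ε ^ 2 / 2) * ((nkk : ℝ) / ((suppF θb).card : ℝ) ^ 2)
          + 2 * Real.log ((suppF θb).card : ℝ)) := by
  classical
  set S : Finset (PairIdx p) := suppF θb with hSdef
  have hf0 := isingPmf_nonneg θb
  have hf1 := isingPmf_sum_one θb
  set w : (Fin nkk → Fin p → Bool) → ℝ := fun xs => ∏ i, isingPmf θb (xs i) with hwdef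
  have hw0 : ∀ xs, 0 ≤ w xs := fun xs => Finset.prod_nonneg fun i _ => hf0 _
  by_cases hS : S = ∅
  · haveI : IsEmpty ↥S := by rw [hS]; exact inferInstance
    have hE : {xs : Fin nkk → Fin p → Bool
        | τmax + ε ≤ lamMax (subm (Uhat xs) S S)} = ∅ := by
      ext xs
      simp only [Set.mem_setOf_eq, Set.mem_empty_iff_false, iff_false, not_le,
        lamMax_of_isEmpty]
      linarith
    rw [hE]
    have : finProb w (∅ : Set (Fin nkk → Fin p → Bool)) = 0 := by
      simp [finProb]
    rw [this]
    positivity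
  · have hqpos : 0 < S.card := Finset.card_pos.mpr (Finset.nonempty_iff_ne_empty.mpr hS)
    have hq1 : (1:ℝ) ≤ (S.card : ℝ) := by exact_mod_cast hqpos
    have hq0 : (0:ℝ) < (S.card : ℝ) := by linarith
    have hn0 : (0:ℝ) < (nkk : ℝ) := by exact_mod_cast hnk
    set t0 : ℝ := ε / S.card with ht0def
    have ht0 : 0 < t0 := div_pos hε hq0
    haveI hSne : Nonempty ↥S := (Finset.nonempty_iff_ne_empty.mpr hS).to_subtype
    -- the events
    set A : (↥S × ↥S) × Bool → Set (Fin nkk → Fin p → Bool) := fun k =>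
      {xs | t0 ≤ (if k.2 then Uhat xs k.1.1.1 k.1.2.1 - Upop θb k.1.1.1 k.1.2.1
        else Upop θb k.1.1.1 k.1.2.1 - Uhat xs k.1.1.1 k.1.2.1)} with hAdef
    -- coverage
    have hcov : ∀ xs ∈ {xs : Fin nkk → Fin p → Bool
        | τmax + ε ≤ lamMax (subm (Uhat xs) S S)}, ∃ k, xs ∈ A k := by
      intro xs hxs
      simp only [Set.mem_setOf_eq] at hxs
      by_contra hno
      push_neg at hno
      have habs : ∀ e e' : ↥S, |Uhat xs e.1 e'.1 - Upop θb e.1 e'.1| < t0 := by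
        intro e e'
        have h1 := hno ((e, e'), true)
        have h2 := hno ((e, e'), false)
        simp only [hAdef, Set.mem_setOf_eq, if_true, Bool.false_eq_true, if_false, not_le] at h1 h2
        rw [abs_lt]
        constructor <;> linarith
      set D : Matrix ↥S ↥S ℝ := subm (Uhat xs) S S - subm (Upop θb) S S with hDdef
      obtain ⟨k0, -, hk0⟩ := Finset.exists_max_image (Finset.univ : Finset (↥S × ↥S))
        (fun ee => |D ee.1 ee.2|) Finset.univ_nonempty
      set c : ℝ := |D k0.1 k0.2| with hcdef
      have hclt : c < t0 := habs k0.1 k0.2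
      have hcbd : ∀ e e' : ↥S, |D e e'| ≤ c := fun e e' => hk0 (e, e') (Finset.mem_univ _)
      have hv : ∀ v : {v : ↥S → ℝ // ∑ i, v i ^ 2 = 1},
          v.1 ⬝ᵥ (subm (Uhat xs) S S).mulVec v.1 ≤ τmax + c * S.card := by
        intro v
        have hsplit : subm (Uhat xs) S S = subm (Upop θb) S S + D := by
          rw [hDdef]; abel
        rw [hsplit, Matrix.add_mulVec, dotProduct_add]
        have h1 : v.1 ⬝ᵥ (subm (Upop θb) S S).mulVec v.1 ≤ τmax :=
          le_trans (le_lamMax _ v.1 v.2) condB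
        have h2 : v.1 ⬝ᵥ D.mulVec v.1 ≤ c * S.card := by
          have := quadForm_le_card_mul D c hcbd v.1 v.2
          simpa [Fintype.card_coe] using this
        linarith
      haveI : Nonempty {v : ↥S → ℝ // ∑ i, v i ^ 2 = 1} := by
        obtain ⟨s0⟩ := hSne
        refine ⟨⟨fun i => if i = s0 then 1 else 0, ?_⟩⟩
        have hsq : ∀ i : ↥S, (if i = s0 then (1:ℝ) else 0) ^ 2
            = if i = s0 then 1 else 0 := by
          intro i; split_ifs <;> norm_num
        simp only [hsq, Finset.sum_ite_eq', Finset.mem_univ, if_true]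
      have hlam : lamMax (subm (Uhat xs) S S) ≤ τmax + c * S.card := ciSup_le hv
      have : c * S.card < ε := by
        calc c * S.card < t0 * S.card := by
              exact mul_lt_mul_of_pos_right hclt hq0
          _ = ε := div_mul_cancel₀ ε hq0.ne'
      linarith
    calc finProb w {xs | τmax + ε ≤ lamMax (subm (Uhat xs) S S)}
        ≤ ∑ k : (↥S × ↥S) × Bool, finProb w (A k) := finProb_le_sum w hw0 _ A hcov
      _ ≤ ∑ k : (↥S × ↥S) × Bool, Real.exp (-(nkk:ℝ) * t0 ^ 2 / 2) := by
          refine Finset.sum_le_sum fun k _ => ?_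
          exact event_bound θb nkk hnk k.1.1.1 k.1.2.1 t0 ht0 k.2
      _ = 2 * Real.exp (-(ε ^ 2 / 2) * ((nkk : ℝ) / (S.card : ℝ) ^ 2)
          + 2 * Real.log (S.card : ℝ)) := by
          rw [Finset.sum_const, Finset.card_univ, nsmul_eq_mul]
          have hcard : (Fintype.card ((↥S × ↥S) × Bool) : ℝ)
              = (S.card : ℝ) * S.card * 2 := by
            rw [Fintype.card_prod, Fintype.card_prod, Fintype.card_coe, Fintype.card_bool]
            push_cast; ring
          rw [hcard, ht0def]
          exact final_arith _ _ _ hq1 hn0 hε
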